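/- Let A satisfy REC(S, α, β) with 0 < α ≤ β, let x* ∈ S, f(x) = ‖A(x − x*)‖², η = 1/β, and suppose x_t, x_{t+1} ∈ S satisfy ‖w_t − x_{t+1}‖² ≤ ‖x* − w_t‖² + δ where w_t = x_t − ηAᵀA(x_t − x*). Then 2⟨x_t − x_{t+1}, AᵀA(x* − x_t)⟩ ≤ (1/(ηα) − 2) f(x_t) − (1/(ηβ))‖A(x_{t+1} − x_t)‖² + δ/η. -/

import Mathlib

open Matrix

set_option maxHeartbeats 1000000

theorem pgd_inner_product_bound {m n : ℕ} (A : Matrix (Fin m) (Fin n) ℝ)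
    (S : Set (EuclideanSpace ℝ (Fin n))) (α β δ η : ℝ)
    (hα : 0 < α) (hαβ : α ≤ β) (hδ : 0 ≤ δ) (hη : η = 1 / β)
    (hREC : ∀ x₁ ∈ S, ∀ x₂ ∈ S,
      α * ‖x₁ - x₂‖ ^ 2 ≤ ‖Matrix.toEuclideanLin A (x₁ - x₂)‖ ^ 2 ∧
      ‖Matrix.toEuclideanLin A (x₁ - x₂)‖ ^ 2 ≤ β * ‖x₁ - x₂‖ ^ 2)
    (xs xt xt1 : EuclideanSpace ℝ (Fin n))
    (hxs : xs ∈ S) (hxt : xt ∈ S) (hxt1 : xt1 ∈ S)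
    (f : EuclideanSpace ℝ (Fin n) → ℝ)
    (hf : ∀ x, f x = ‖Matrix.toEuclideanLin A (x - xs)‖ ^ 2)
    (w : EuclideanSpace ℝ (Fin n))
    (hw : w = xt - η • Matrix.toEuclideanLin Aᵀ (Matrix.toEuclideanLin A (xt - xs)))
    (hproj : ‖w - xt1‖ ^ 2 ≤ ‖xs - w‖ ^ 2 + δ) :
    2 * (inner ℝ (xt - xt1)
        (Matrix.toEuclideanLin Aᵀ (Matrix.toEuclideanLin A (xs - xt))) : ℝ) ≤
      (1 / (η * α) - 2) * f xt -
      (1 / (η * β)) * ‖Matrix.toEuclideanLin A (xt1 - xt)‖ ^ 2 + δ / η := by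
  have hβ : 0 < β := lt_of_lt_of_le hα hαβ
  have hηpos : 0 < η := by rw [hη]; positivity
  set B := Matrix.toEuclideanLin A with hB
  have hadj : ∀ (x : EuclideanSpace ℝ (Fin n)) (y : EuclideanSpace ℝ (Fin m)),
      (inner ℝ x (Matrix.toEuclideanLin Aᵀ y) : ℝ) = inner ℝ (B x) y := by
    intro x y
    rw [← Matrix.conjTranspose_eq_transpose_of_trivial,
      Matrix.toEuclideanLin_conjTranspose_eq_adjoint, LinearMap.adjoint_inner_right]
  set g := Matrix.toEuclideanLin Aᵀ (B (xt - xs)) with hg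
  -- expand hproj
  have hL : ‖w - xt1‖ ^ 2 = ‖xt - xt1‖ ^ 2 - 2 * η * inner ℝ (xt - xt1) g + η ^ 2 * ‖g‖ ^ 2 := by
    have : w - xt1 = (xt - xt1) - η • g := by rw [hw]; abel
    rw [this, norm_sub_sq_real, real_inner_smul_right, norm_smul]
    simp [abs_of_pos hηpos, mul_pow]
    ring
  have hR : ‖xs - w‖ ^ 2 = ‖xs - xt‖ ^ 2 + 2 * η * inner ℝ (xs - xt) g + η ^ 2 * ‖g‖ ^ 2 := by
    have : xs - w = (xs - xt) + η • g := by rw [hw]; abel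
    rw [this, norm_add_sq_real, real_inner_smul_right, norm_smul]
    simp [abs_of_pos hηpos, mul_pow]
    ring
  have key : ‖xt - xt1‖ ^ 2 - 2 * η * inner ℝ (xt - xt1) g ≤
      ‖xs - xt‖ ^ 2 + 2 * η * inner ℝ (xs - xt) g + δ := by nlinarith [hproj, hL, hR]
  have hvg : (inner ℝ (xs - xt) g : ℝ) = - ‖B (xt - xs)‖ ^ 2 := by
    rw [hg, hadj]
    have : B (xs - xt) = - B (xt - xs) := by rw [← map_neg]; congr 1; abel
    rw [this, inner_neg_left, real_inner_self_eq_norm_sq]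
  -- goal inner equals -(inner ℝ (xt - xt1) g)
  have hgoal : (inner ℝ (xt - xt1) (Matrix.toEuclideanLin Aᵀ (B (xs - xt))) : ℝ)
      = - inner ℝ (xt - xt1) g := by
    have : B (xs - xt) = - B (xt - xs) := by rw [← map_neg]; congr 1; abel
    rw [this, map_neg, inner_neg_right, hg]
  rw [hgoal, hf]
  -- REC bounds
  have hrec1 : α * ‖xt - xs‖ ^ 2 ≤ ‖B (xt - xs)‖ ^ 2 := (hREC xt hxt xs hxs).1
  have hrec2 : ‖B (xt1 - xt)‖ ^ 2 ≤ β * ‖xt1 - xt‖ ^ 2 := (hREC xt1 hxt1 xt hxt).2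
  have hn1 : ‖xs - xt‖ = ‖xt - xs‖ := norm_sub_rev _ _
  have hn2 : ‖xt - xt1‖ = ‖xt1 - xt‖ := norm_sub_rev _ _
  rw [hvg] at key
  rw [hn1, hn2] at key
  apply (mul_le_mul_iff_right₀ hηpos).mp
  have hη0 : η ≠ 0 := ne_of_gt hηpos
  have hα0 : α ≠ 0 := ne_of_gt hα
  have hβ0 : β ≠ 0 := ne_of_gt hβ
  have e1 : η * ((1 / (η * α) - 2) * ‖B (xt - xs)‖ ^ 2 -
      1 / (η * β) * ‖B (xt1 - xt)‖ ^ 2 + δ / η) =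
      (1 / α) * ‖B (xt - xs)‖ ^ 2 - 2 * η * ‖B (xt - xs)‖ ^ 2 -
      (1 / β) * ‖B (xt1 - xt)‖ ^ 2 + δ := by
    field_simp
  rw [e1]
  have ha : ‖xt - xs‖ ^ 2 ≤ (1 / α) * ‖B (xt - xs)‖ ^ 2 := by
    rw [one_div, inv_mul_eq_div, le_div_iff₀ hα]
    nlinarith [hrec1]
  have hb : (1 / β) * ‖B (xt1 - xt)‖ ^ 2 ≤ ‖xt1 - xt‖ ^ 2 := by
    rw [one_div, inv_mul_eq_div, div_le_iff₀ hβ]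
    nlinarith [hrec2]
  set I : ℝ := inner ℝ (xt - xt1) g with hI
  set c := ‖B (xt - xs)‖ ^ 2
  set d := ‖B (xt1 - xt)‖ ^ 2
  set p := ‖xt - xs‖ ^ 2
  set q := ‖xt1 - xt‖ ^ 2
  nlinarith [key, ha, hb]
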